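/- For every node u of the derivation tree T_G of a normal-form TSLP, the tree or context s_u derived at u satisfies: if s_u is a tree then 2|s_u| − 1 equals the number of leaves of the subtree of T_G rooted at u, and if s_u is a context then 2|s_u| equals that number of leaves. -/
import Mathlib


/-- Labelled binary trees over an alphabet `A`. -/
inductive BTree (A : Type*) : Type _
  | leaf : A → BTree A
  | node : A → BTree A → BTree A → BTree A

/-- The number of leaves of a labelled binary tree. -/
def BTree.numLeaves {A : Type*} : BTree A → ℕ
  | .leaf _ => 1
  | .node _ l r => l.numLeaves + r.numLeaves

/-- Contexts over `A`: binary trees with one parameter leaf.  `Ctx.left a c t`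
denotes `a(c, t)`, `Ctx.right a t c` denotes `a(t, c)`. -/
inductive Ctx (A : Type*) : Type _
  | hole : Ctx A
  | left : A → Ctx A → BTree A → Ctx A
  | right : A → BTree A → Ctx A → Ctx A

/-- The size of a context: its number of leaves, excluding the parameter. -/
def Ctx.size {A : Type*} : Ctx A → ℕ
  | .hole => 0
  | .left _ c t => c.size + t.numLeaves
  | .right _ t c => t.numLeaves + c.size

/-- Substitution of a tree into a context: `c[t]`. -/
def Ctx.subst {A : Type*} : Ctx A → BTree A → BTree A
  | .hole, s => s
  | .left a c t, s => .node a (c.subst s) t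
  | .right a t c, s => .node a t (c.subst s)

/-- Composition of contexts: `c[d]`. -/
def Ctx.comp {A : Type*} : Ctx A → Ctx A → Ctx A
  | .hole, d => d
  | .left a c t, d => .left a (c.comp d) t
  | .right a t c, d => .right a t (c.comp d)

/-- A tree or a context (the possible values `val_G(α)` derived from a symbol
`α` of a normal-form TSLP). -/
inductive TcVal (A : Type*) : Type _
  | tree : BTree A → TcVal A
  | ctx : Ctx A → TcVal A

/-- The size `|s|` of a tree or context: its number of (non-parameter) leaves. -/
def TcVal.size {A : Type*} : TcVal A → ℕ
  | .tree t => t.numLeaves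
  | .ctx c => c.size

/-- Derivation trees of a normal-form TSLP: binary trees each of whose nodes
`u` is annotated with the derived tree or context `s_u`. -/
inductive DTree (A : Type*) : Type _
  | lf : TcVal A → DTree A
  | nd : TcVal A → DTree A → DTree A → DTree A

/-- The annotation `s_u` of the root `u` of a derivation tree. -/
def DTree.root {A : Type*} : DTree A → TcVal A
  | .lf s => s
  | .nd s _ _ => s

/-- The ways the value at a node of the derivation tree of a normal-form TSLP
is obtained from the values of its two children, according to the right-hand
side forms `A_j(α)`, `A_j(A_k(x))`, `a(α,x)` and `a(x,α)`. -/
inductive combineOK {A : Type*} : TcVal A → TcVal A → TcVal A → Prop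
  | subst (c : Ctx A) (t : BTree A) :
      combineOK (.ctx c) (.tree t) (.tree (c.subst t))
  | comp (c d : Ctx A) :
      combineOK (.ctx c) (.ctx d) (.ctx (c.comp d))
  | leftArg (a : A) (t : BTree A) :
      combineOK (.tree (.leaf a)) (.tree t) (.ctx (.right a t .hole))
  | rightArg (a : A) (t : BTree A) :
      combineOK (.tree (.leaf a)) (.tree t) (.ctx (.left a .hole t))

/-- A (full) derivation tree of a normal-form TSLP: leaves are labelled with
terminal symbols, and the value at each internal node is obtained from the
values of its children as prescribed by a normal-form right-hand side. -/
def DTree.consistent {A : Type*} : DTree A → Prop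
  | .lf s => ∃ a : A, s = .tree (.leaf a)
  | .nd s l r => combineOK l.root r.root s ∧ l.consistent ∧ r.consistent

/-- The number of leaves of a derivation tree. -/
def DTree.numLeaves {A : Type*} : DTree A → ℕ
  | .lf _ => 1
  | .nd _ l r => l.numLeaves + r.numLeaves

/-- `Subt d D`: `d` is the subtree of `D` rooted at some node of `D`. -/
inductive Subt {A : Type*} : DTree A → DTree A → Prop
  | refl (d : DTree A) : Subt d d
  | left {d l : DTree A} (s : TcVal A) (r : DTree A) :
      Subt d l → Subt d (.nd s l r)
  | right {d r : DTree A} (s : TcVal A) (l : DTree A) :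
      Subt d r → Subt d (.nd s l r)


theorem BTree.one_le_numLeaves {A : Type*} (t : BTree A) : 1 ≤ t.numLeaves := by
  induction t with
  | leaf a => simp [BTree.numLeaves]
  | node a l r ihl ihr => simp [BTree.numLeaves]; omega

theorem Ctx.subst_numLeaves {A : Type*} (c : Ctx A) (t : BTree A) :
    (c.subst t).numLeaves = c.size + t.numLeaves := by
  induction c with
  | hole => simp [Ctx.subst, Ctx.size]
  | left a c s ih => simp [Ctx.subst, Ctx.size, BTree.numLeaves, ih]; omega
  | right a s c ih => simp [Ctx.subst, Ctx.size, BTree.numLeaves, ih]; omega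

theorem Ctx.comp_size {A : Type*} (c d : Ctx A) :
    (c.comp d).size = c.size + d.size := by
  induction c with
  | hole => simp [Ctx.comp, Ctx.size]
  | left a c s ih => simp [Ctx.comp, Ctx.size, ih]; omega
  | right a s c ih => simp [Ctx.comp, Ctx.size, ih]; omega

theorem Subt.consistent {A : Type*} {d D : DTree A} (h : Subt d D)
    (hD : D.consistent) : d.consistent := by
  induction h with
  | refl => exact hD
  | left s r _ ih => exact ih hD.2.1
  | right s l _ ih => exact ih hD.2.2

theorem main_aux {A : Type*} (d : DTree A) (hc : d.consistent) :
    (∀ t : BTree A, d.root = .tree t → 2 * t.numLeaves - 1 = d.numLeaves) ∧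
    (∀ c : Ctx A, d.root = .ctx c → 2 * c.size = d.numLeaves) := by
  induction d with
  | lf s =>
    obtain ⟨a, rfl⟩ := hc
    constructor
    · rintro t ht
      simp [DTree.root] at ht
      subst ht
      simp [BTree.numLeaves, DTree.numLeaves]
    · rintro c hcx
      simp [DTree.root] at hcx
  | nd s l r ihl ihr =>
    obtain ⟨hcomb, hl, hr⟩ := hc
    have IHL := ihl hl
    have IHR := ihr hr
    generalize hL : l.root = L at hcomb
    generalize hR : r.root = R at hcomb
    cases hcomb with
    | subst c t =>
      have h1 := IHL.2 c hL
      have h2 := IHR.1 t hR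
      have h3 := t.one_le_numLeaves
      constructor
      · rintro t' ht'
        simp [DTree.root] at ht'; subst ht'
        simp [DTree.numLeaves, Ctx.subst_numLeaves]
        omega
      · rintro c' hc'
        simp [DTree.root] at hc'
    | comp c c2 =>
      have h1 := IHL.2 c hL
      have h2 := IHR.2 c2 hR
      constructor
      · rintro t' ht'; simp [DTree.root] at ht'
      · rintro c' hc'
        simp [DTree.root] at hc'; subst hc'
        simp [DTree.numLeaves, Ctx.comp_size]
        omega
    | leftArg a t =>
      have h1 := IHL.1 (.leaf a) hL
      have h2 := IHR.1 t hR
      have h3 := t.one_le_numLeaves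
      constructor
      · rintro t' ht'; simp [DTree.root] at ht'
      · rintro c' hc'
        simp [DTree.root] at hc'; subst hc'
        simp [DTree.numLeaves, Ctx.size, BTree.numLeaves] at *
        omega
    | rightArg a t =>
      have h1 := IHL.1 (.leaf a) hL
      have h2 := IHR.1 t hR
      have h3 := t.one_le_numLeaves
      constructor
      · rintro t' ht'; simp [DTree.root] at ht'
      · rintro c' hc'
        simp [DTree.root] at hc'; subst hc'
        simp [DTree.numLeaves, Ctx.size, BTree.numLeaves] at *
        omega

/-- For every node `u` of the derivation tree of a normal-form TSLP: if the
derived value `s_u` is a tree then `2|s_u| − 1` equals the number of leaves of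
the subtree rooted at `u`, and if `s_u` is a context then `2|s_u|` equals that
number of leaves. -/
theorem derived_size_eq_leaves {A : Type*} (D d : DTree A)
    (hcons : D.consistent) (hsub : Subt d D) :
    (∀ t : BTree A, d.root = .tree t → 2 * t.numLeaves - 1 = d.numLeaves) ∧
    (∀ c : Ctx A, d.root = .ctx c → 2 * c.size = d.numLeaves) := by
  exact main_aux d (hsub.consistent hcons)
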